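/- For all x with 0 < |x| < π/2, one has 3·cos x ≤ x/sin x + 2·(x/tan x) ≤ 2 + cos x. -/

import Mathlib

open Real

lemma aux_tc {t : ℝ} (ht : 0 ≤ t) (ht2 : t < π / 2) : t * Real.cos t ≤ Real.sin t := by
  rcases eq_or_lt_of_le ht with h | h
  · simp [← h]
  · have hc : 0 < Real.cos t := Real.cos_pos_of_mem_Ioo ⟨by linarith [Real.pi_pos], ht2⟩
    have := Real.lt_tan h ht2
    rw [Real.tan_eq_sin_div_cos, lt_div_iff₀ hc] at this
    linarith

lemma aux_C {x : ℝ} (hx : 0 ≤ x) (hx2 : x ≤ π / 2) :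
    x * Real.sin x ≤ 2 * (1 - Real.cos x) := by
  have h1 : (0:ℝ) ≤ x / 2 := by linarith
  have h2 : x / 2 < π / 2 := by
    have := Real.pi_pos; linarith
  have h3 := aux_tc h1 h2
  have hs : 0 ≤ Real.sin (x / 2) := Real.sin_nonneg_of_nonneg_of_le_pi h1 (by linarith [Real.pi_pos])
  have e1 : Real.sin x = 2 * Real.sin (x / 2) * Real.cos (x / 2) := by
    rw [← Real.sin_two_mul]; ring_nf
  have e2 : Real.cos x = 2 * Real.cos (x / 2) ^ 2 - 1 := by
    rw [← Real.cos_two_mul]; ring_nf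
  have pyth := Real.sin_sq_add_cos_sq (x / 2)
  nlinarith [mul_le_mul_of_nonneg_left h3 hs]

/-- key lower bound: `3 sin x cos x ≤ x (1 + 2 cos x)` on `[0, π/2]`. -/
lemma aux_A {x : ℝ} (hx : 0 ≤ x) (hx2 : x ≤ π / 2) :
    3 * Real.sin x * Real.cos x ≤ x * (1 + 2 * Real.cos x) := by
  set g : ℝ → ℝ := fun y => y * (1 + 2 * Real.cos y) - 3 * Real.sin y * Real.cos y with hg
  have hderiv : ∀ y : ℝ, HasDerivAt g
      ((1 + 2 * Real.cos y) + y * (2 * -Real.sin y) -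
        (3 * Real.cos y * Real.cos y + 3 * Real.sin y * -Real.sin y)) y := by
    intro y
    have h1 : HasDerivAt (fun y : ℝ => y * (1 + 2 * Real.cos y))
        (1 * (1 + 2 * Real.cos y) + y * (2 * -Real.sin y)) y :=
      (hasDerivAt_id y).mul (((Real.hasDerivAt_cos y).const_mul 2).const_add 1)
    have h2 : HasDerivAt (fun y : ℝ => 3 * Real.sin y * Real.cos y)
        (3 * Real.cos y * Real.cos y + 3 * Real.sin y * -Real.sin y) y :=
      ((Real.hasDerivAt_sin y).const_mul 3).mul (Real.hasDerivAt_cos y)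
    have := h1.sub h2
    exact this.congr_deriv (by ring)
  have hmono : MonotoneOn g (Set.Icc 0 (π / 2)) := by
    apply monotoneOn_of_hasDerivWithinAt_nonneg (convex_Icc 0 (π / 2))
      (f' := fun y => (1 + 2 * Real.cos y) + y * (2 * -Real.sin y) -
        (3 * Real.cos y * Real.cos y + 3 * Real.sin y * -Real.sin y))
    · exact fun y _ => (hderiv y).continuousAt.continuousWithinAt
    · exact fun y _ => (hderiv y).hasDerivWithinAt
    · intro y hy
      rw [interior_Icc] at hy
      obtain ⟨hy0, hy2⟩ := hy
      have hc : 0 ≤ Real.cos y := Real.cos_nonneg_of_mem_Icc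
        ⟨by linarith [Real.pi_pos], le_of_lt hy2⟩
      have hc1 : Real.cos y ≤ 1 := Real.cos_le_one y
      have hC := aux_C (le_of_lt hy0) (le_of_lt hy2)
      have pyth := Real.sin_sq_add_cos_sq y
      nlinarith
  have h0 : g 0 = 0 := by simp [hg]
  have := hmono (Set.left_mem_Icc.mpr (by linarith [Real.pi_pos])) ⟨hx, hx2⟩ hx
  rw [h0] at this
  simp only [hg] at this
  linarith

/-- key upper bound: `x (1 + 2 cos x) ≤ (2 + cos x) sin x` on `[0, π/2]`. -/
lemma aux_B {x : ℝ} (hx : 0 ≤ x) (hx2 : x ≤ π / 2) :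
    x * (1 + 2 * Real.cos x) ≤ (2 + Real.cos x) * Real.sin x := by
  set g : ℝ → ℝ := fun y => (2 + Real.cos y) * Real.sin y - y * (1 + 2 * Real.cos y) with hg
  have hderiv : ∀ y : ℝ, HasDerivAt g
      ((-Real.sin y * Real.sin y + (2 + Real.cos y) * Real.cos y) -
        ((1 + 2 * Real.cos y) + y * (2 * -Real.sin y))) y := by
    intro y
    have h1 : HasDerivAt (fun y : ℝ => (2 + Real.cos y) * Real.sin y)
        (-Real.sin y * Real.sin y + (2 + Real.cos y) * Real.cos y) y :=
      ((Real.hasDerivAt_cos y).const_add 2).mul (Real.hasDerivAt_sin y)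
    have h2 : HasDerivAt (fun y : ℝ => y * (1 + 2 * Real.cos y))
        (1 * (1 + 2 * Real.cos y) + y * (2 * -Real.sin y)) y :=
      (hasDerivAt_id y).mul (((Real.hasDerivAt_cos y).const_mul 2).const_add 1)
    have := h1.sub h2
    exact this.congr_deriv (by ring)
  have hmono : MonotoneOn g (Set.Icc 0 (π / 2)) := by
    apply monotoneOn_of_hasDerivWithinAt_nonneg (convex_Icc 0 (π / 2))
      (f' := fun y => (-Real.sin y * Real.sin y + (2 + Real.cos y) * Real.cos y) -
        ((1 + 2 * Real.cos y) + y * (2 * -Real.sin y)))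
    · exact fun y _ => (hderiv y).continuousAt.continuousWithinAt
    · exact fun y _ => (hderiv y).hasDerivWithinAt
    · intro y hy
      rw [interior_Icc] at hy
      obtain ⟨hy0, hy2⟩ := hy
      have hs : 0 ≤ Real.sin y := Real.sin_nonneg_of_nonneg_of_le_pi (le_of_lt hy0)
        (by linarith [Real.pi_pos])
      have hsx : Real.sin y ≤ y := Real.sin_le (le_of_lt hy0)
      have pyth := Real.sin_sq_add_cos_sq y
      nlinarith [mul_le_mul_of_nonneg_left hsx hs]
  have h0 : g 0 = 0 := by simp [hg]
  have := hmono (Set.left_mem_Icc.mpr (by linarith [Real.pi_pos])) ⟨hx, hx2⟩ hx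
  rw [h0] at this
  simp only [hg] at this
  linarith

lemma aux_main {x : ℝ} (hx : 0 < x) (hx2 : x < π / 2) :
    3 * Real.cos x ≤ x / Real.sin x + 2 * (x / Real.tan x) ∧
    x / Real.sin x + 2 * (x / Real.tan x) ≤ 2 + Real.cos x := by
  have hs : 0 < Real.sin x := Real.sin_pos_of_pos_of_lt_pi hx (by linarith [Real.pi_pos])
  have hc : 0 < Real.cos x := Real.cos_pos_of_mem_Ioo ⟨by linarith [Real.pi_pos], hx2⟩
  have ht : Real.tan x = Real.sin x / Real.cos x := Real.tan_eq_sin_div_cos x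
  have hE : x / Real.sin x + 2 * (x / Real.tan x) = x * (1 + 2 * Real.cos x) / Real.sin x := by
    rw [ht]
    field_simp
  have hA := aux_A (le_of_lt hx) (le_of_lt hx2)
  have hB := aux_B (le_of_lt hx) (le_of_lt hx2)
  rw [hE]
  constructor
  · rw [le_div_iff₀ hs]; nlinarith
  · rw [div_le_iff₀ hs]; nlinarith

theorem stmt6 (x : ℝ) (h0 : 0 < |x|) (h1 : |x| < π / 2) :
    3 * Real.cos x ≤ x / Real.sin x + 2 * (x / Real.tan x) ∧
    x / Real.sin x + 2 * (x / Real.tan x) ≤ 2 + Real.cos x := by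
  rcases abs_pos.mp h0 |>.lt_or_gt with hneg | hpos
  · have h1' : -x < π / 2 := by rwa [abs_of_neg hneg] at h1
    have := aux_main (by linarith : (0:ℝ) < -x) h1'
    rw [show x / Real.sin x = (-x) / Real.sin (-x) by
          rw [Real.sin_neg, div_neg, neg_div, neg_neg],
        show x / Real.tan x = (-x) / Real.tan (-x) by
          rw [Real.tan_neg, div_neg, neg_div, neg_neg],
        show Real.cos x = Real.cos (-x) by rw [Real.cos_neg]]
    exact this
  · exact aux_main hpos (by rwa [abs_of_pos hpos] at h1)
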